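/- The special hyperbolic orbit h is the only Reeb orbit contained in the connected-sum sphere S₊: if γ : ℝ → ℝ⁴ is differentiable with γ′(t) = R(γ(t)) for all t, and if f(γ(t)) = 1 and the w-coordinate γ₄(t) = 0 for all t, then γ₃(t) = 0 and γ₁(t)² + γ₂(t)² = 4 for all t; that is, the image of γ is contained in h. -/
import Mathlib


noncomputable section

/-- The function `f(x,y,z,w) = x²/4 + y²/4 + z² - w²/2` from the Weinstein one-handle model. -/
def fW (p : Fin 4 → ℝ) : ℝ :=
  (1 / 4) * p 0 ^ 2 + (1 / 4) * p 1 ^ 2 + p 2 ^ 2 - (1 / 2) * p 3 ^ 2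

/-- The function `κ(p) = 1/(1 + 3z² + (3/2)w²)`. -/
def κW (p : Fin 4 → ℝ) : ℝ :=
  1 / (1 + 3 * p 2 ^ 2 + (3 / 2) * p 3 ^ 2)

/-- The Reeb vector field `R(p) = κ(p)·(-(1/2)y, (1/2)x, w, 2z)`. -/
def RW (p : Fin 4 → ℝ) : Fin 4 → ℝ :=
  κW p • ![-(1 / 2) * p 1, (1 / 2) * p 0, p 3, 2 * p 2]

/-- The special hyperbolic orbit `h` is the only Reeb orbit contained in the connected-sum
sphere `S₊`: any Reeb trajectory staying in `S₊ = {f = 1, w = 0}` has `z ≡ 0` and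
`x² + y² ≡ 4`, i.e. lies in `h`. -/
theorem only_reeb_orbit_in_sphere (γ : ℝ → Fin 4 → ℝ)
    (hdiff : Differentiable ℝ γ)
    (hode : ∀ t : ℝ, deriv γ t = RW (γ t))
    (hf : ∀ t : ℝ, fW (γ t) = 1)
    (hw : ∀ t : ℝ, γ t 3 = 0) :
    ∀ t : ℝ, γ t 2 = 0 ∧ γ t 0 ^ 2 + γ t 1 ^ 2 = 4 := by
  have hz : ∀ t : ℝ, γ t 2 = 0 := by
    intro t
    have hd := (hasDerivAt_pi.mp (hdiff t).hasDerivAt) 3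
    have hconst : (fun s => γ s 3) = fun _ => (0 : ℝ) := funext hw
    rw [hconst] at hd
    have h0 : (deriv γ t) 3 = 0 := hd.unique (hasDerivAt_const t (0 : ℝ))
    rw [hode t] at h0
    simp [RW, κW, hw t] at h0
    have hpos : (0 : ℝ) < 1 + 3 * γ t 2 ^ 2 := by positivity
    rcases h0 with h0 | h0
    · nlinarith
    · exact h0
  intro t
  refine ⟨hz t, ?_⟩
  have hft := hf t
  simp [fW, hz t, hw t] at hft
  linarith
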